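/- Let {φ_t}_{t=0}^T be representation maps, each monotone in its third argument, and for t₀ ∈ {0,…,T} define the tail cost J_{t₀}(u,x) = φ_{t₀}(x(t₀),u(t₀), φ_{t₀+1}(x(t₀+1),u(t₀+1), …, φ_T(x(T))…)). Suppose the MSOP initialized at (x_0, 0) has a unique solution (u, x) with u = (u(0),…,u(T−1)), x = (x(0),…,x(T)). Then the family of MSOP's satisfies the Principle of Optimality at x_0: for every t with 0 ≤ t < T, the truncated sequences v = (u(t),…,u(T−1)) and h = (x(t),…,x(T)) solve the MSOP with cost J_t initialized at (x(t), t). -/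
import Mathlib


open Set Filter MeasureTheory

/-- `nest φ φT u x t k` is the backward composition of representation maps
`φ t (x t) (u t) (φ (t+1) (x (t+1)) (u (t+1)) (… (φT (x (t+k))) …)))`
with `k` composition steps, terminating at time `t + k`. -/
def nest {α β : Type*} (φ : ℕ → α → β → ℝ → ℝ) (φT : α → ℝ)
    (u : ℕ → β) (x : ℕ → α) : ℕ → ℕ → ℝ
  | t, 0 => φT (x t)
  | t, k + 1 => φ t (x t) (u t) (nest φ φT u x (t + 1) k)

/-- `imSet φ φT X U t k` is the image of the representation map at time `t`
over its domain, where `k` is the number of remaining steps until the terminal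
time `t + k` (so `Image φ_t = imSet φ φT X U t (T - t)` when the horizon is `T`). -/
def imSet {α β : Type*} (φ : ℕ → α → β → ℝ → ℝ) (φT : α → ℝ)
    (X : ℕ → Set α) (U : Set β) : ℕ → ℕ → Set ℝ
  | t, 0 => φT '' X t
  | t, k + 1 =>
      {z | ∃ a ∈ X t, ∃ b ∈ U, ∃ w ∈ imSet φ φT X U (t + 1) k, z = φ t a b w}

/-- `J` is represented on its domain by the representation maps `φ, φT`
(backward composition with horizon `T`). -/
def IsRep {α β : Type*} (T : ℕ) (X : ℕ → Set α) (U : Set β)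
    (J : (ℕ → β) → (ℕ → α) → ℝ) (φ : ℕ → α → β → ℝ → ℝ) (φT : α → ℝ) : Prop :=
  ∀ u x, (∀ t, t < T → u t ∈ U) → (∀ t, t ≤ T → x t ∈ X t) →
    J u x = nest φ φT u x 0 T

/-- each representation map is monotone in its third argument on the image of
the next representation map. -/
def MonoRep {α β : Type*} (T : ℕ) (X : ℕ → Set α) (U : Set β)
    (φ : ℕ → α → β → ℝ → ℝ) (φT : α → ℝ) : Prop :=
  ∀ t, t < T → ∀ a ∈ X t, ∀ b ∈ U,
    ∀ z ∈ imSet φ φT X U (t + 1) (T - (t + 1)),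
      ∀ w ∈ imSet φ φT X U (t + 1) (T - (t + 1)),
        w ≤ z → φ t a b w ≤ φ t a b z

/-- each representation map is strictly monotone in its third argument. -/
def StrictMonoRep {α β : Type*} (T : ℕ) (X : ℕ → Set α) (U : Set β)
    (φ : ℕ → α → β → ℝ → ℝ) (φT : α → ℝ) : Prop :=
  ∀ t, t < T → ∀ a ∈ X t, ∀ b ∈ U,
    ∀ z ∈ imSet φ φT X U (t + 1) (T - (t + 1)),
      ∀ w ∈ imSet φ φT X U (t + 1) (T - (t + 1)),
        w < z → φ t a b w < φ t a b z

/-- each representation map is upper semi-continuous in its third argument along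
monotonically decreasing sequences in the image of the next representation map. -/
def USCRep {α β : Type*} (T : ℕ) (X : ℕ → Set α) (U : Set β)
    (φ : ℕ → α → β → ℝ → ℝ) (φT : α → ℝ) : Prop :=
  ∀ t, t < T → ∀ a ∈ X t, ∀ b ∈ U, ∀ z : ℕ → ℝ,
    (∀ i, z i ∈ imSet φ φT X U (t + 1) (T - (t + 1))) →
    (∀ i, z (i + 1) ≤ z i) →
    ∀ L : ℝ, Tendsto z atTop (nhds L) →
      Tendsto (fun i => φ t a b (z i)) atTop (nhds (φ t a b L))

/-- each representation map has bounded image. -/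
def BddRep {α β : Type*} (T : ℕ) (X : ℕ → Set α) (U : Set β)
    (φ : ℕ → α → β → ℝ → ℝ) (φT : α → ℝ) : Prop :=
  ∀ t, t ≤ T → ∃ R, 0 < R ∧ ∀ z ∈ imSet φ φT X U t (T - t), |z| < R

/-- `GamSeq T f X U x0 s u x` says that the input sequence `(u s, …, u (T-1))`
belongs to `Γ_{x0,[s,T-1]}`, with `x` the corresponding state sequence:
`x s = x0`, `x (t+1) = f (x t) (u t) t`, `u t ∈ Γ_{x t, t}` for `s ≤ t ≤ T-1`. -/
def GamSeq {α β : Type*} (T : ℕ) (f : α → β → ℕ → α) (X : ℕ → Set α)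
    (U : Set β) (x0 : α) (s : ℕ) (u : ℕ → β) (x : ℕ → α) : Prop :=
  x s = x0 ∧ ∀ t, s ≤ t → t < T →
    u t ∈ U ∧ x (t + 1) = f (x t) (u t) t ∧ x (t + 1) ∈ X (t + 1)

/-- `(u,x)` is feasible for the MSOP with horizon `T` initialized at `x0` at time `0`. -/
def Feas {α β : Type*} (T : ℕ) (f : α → β → ℕ → α) (X : ℕ → Set α)
    (U : Set β) (x0 : α) (u : ℕ → β) (x : ℕ → α) : Prop :=
  x 0 = x0 ∧ (∀ t, t ≤ T → x t ∈ X t) ∧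
    ∀ t, t < T → u t ∈ U ∧ x (t + 1) = f (x t) (u t) t

/-- `(u,x)` is feasible for the MSOP with horizon `T` initialized at `x0` at time `s`. -/
def FeasFrom {α β : Type*} (T : ℕ) (f : α → β → ℕ → α) (X : ℕ → Set α)
    (U : Set β) (x0 : α) (s : ℕ) (u : ℕ → β) (x : ℕ → α) : Prop :=
  x s = x0 ∧ (∀ t, s ≤ t → t ≤ T → x t ∈ X t) ∧
    ∀ t, s ≤ t → t < T → u t ∈ U ∧ x (t + 1) = f (x t) (u t) t

theorem nest_congr' {α β : Type*} (φ : ℕ → α → β → ℝ → ℝ) (φT : α → ℝ)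
    {u u' : ℕ → β} {x x' : ℕ → α} :
    ∀ k t, (∀ i, t ≤ i → i < t + k → u i = u' i) →
      (∀ i, t ≤ i → i ≤ t + k → x i = x' i) →
      nest φ φT u x t k = nest φ φT u' x' t k
  | 0, t, hu, hx => by simp [nest, hx t le_rfl (by omega)]
  | k + 1, t, hu, hx => by
    simp only [nest]
    rw [hx t le_rfl (by omega), hu t le_rfl (by omega),
      nest_congr' φ φT k (t + 1) (fun i h1 h2 => hu i (by omega) (by omega))
        (fun i h1 h2 => hx i (by omega) (by omega))]

theorem nest_mem' {α β : Type*} (φ : ℕ → α → β → ℝ → ℝ) (φT : α → ℝ)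
    (X : ℕ → Set α) (U : Set β) {u : ℕ → β} {x : ℕ → α} :
    ∀ k t, (∀ i, t ≤ i → i ≤ t + k → x i ∈ X i) →
      (∀ i, t ≤ i → i < t + k → u i ∈ U) →
      nest φ φT u x t k ∈ imSet φ φT X U t k
  | 0, t, hx, hu => ⟨x t, hx t le_rfl (by omega), rfl⟩
  | k + 1, t, hx, hu =>
    ⟨x t, hx t le_rfl (by omega), u t, hu t le_rfl (by omega),
      nest φ φT u x (t + 1) k,
      nest_mem' φ φT X U k (t + 1) (fun i h1 h2 => hx i (by omega) (by omega))
        (fun i h1 h2 => hu i (by omega) (by omega)), rfl⟩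

theorem mono_chain' {α β : Type*} (T : ℕ) (X : ℕ → Set α) (U : Set β)
    (φ : ℕ → α → β → ℝ → ℝ) (φT : α → ℝ) (hMono : MonoRep T X U φ φT)
    {u u' : ℕ → β} {x x' : ℕ → α} (t : ℕ) (ht : t ≤ T)
    (hx : ∀ i, i ≤ T → x i ∈ X i) (hu : ∀ i, i < T → u i ∈ U)
    (hx' : ∀ i, i ≤ T → x' i ∈ X i) (hu' : ∀ i, i < T → u' i ∈ U)
    (hequ : ∀ i, i < t → u i = u' i) (heqx : ∀ i, i ≤ t → x i = x' i)
    (h : nest φ φT u x t (T - t) ≤ nest φ φT u' x' t (T - t)) :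
    ∀ j s, s + j = t → nest φ φT u x s (T - s) ≤ nest φ φT u' x' s (T - s) := by
  intro j
  induction j with
  | zero =>
    intro s hs
    have hst : s = t := by omega
    subst hst
    exact h
  | succ j ih =>
    intro s hs
    have hst : s < t := by omega
    have hTs : T - s = (T - (s + 1)) + 1 := by omega
    rw [hTs]
    simp only [nest]
    rw [heqx s (by omega), hequ s (by omega)]
    have hw := nest_mem' φ φT X U (T - (s + 1)) (s + 1)
      (fun i h1 h2 => hx i (by omega)) (fun i h1 h2 => hu i (by omega))
    have hz := nest_mem' φ φT X U (T - (s + 1)) (s + 1)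
      (fun i h1 h2 => hx' i (by omega)) (fun i h1 h2 => hu' i (by omega))
    exact hMono s (by omega) (x' s) (hx' s (by omega)) (u' s) (hu' s (by omega))
      _ hz _ hw (ih (s + 1) (by omega))

/-- (Principle of Optimality.) Let `{φ_t}` be representation
maps, monotone in the third argument, and let the tail costs be
`J_{t₀}(u,x) = φ_{t₀}(x t₀, u t₀, …, φ_T(x T)…) = nest φ φT u x t₀ (T - t₀)`.
If the MSOP initialized at `(x0, 0)` has the unique solution `(u, x)`, then for
every `t < T` the truncated sequences solve the MSOP with cost `J_t`
initialized at `(x t, t)`. -/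
theorem principle_of_optimality
    {n m : ℕ} (T : ℕ) (hT : 1 ≤ T)
    (X : ℕ → Set (Fin n → ℝ)) (U : Set (Fin m → ℝ))
    (f : (Fin n → ℝ) → (Fin m → ℝ) → ℕ → (Fin n → ℝ))
    (φ : ℕ → (Fin n → ℝ) → (Fin m → ℝ) → ℝ → ℝ) (φT : (Fin n → ℝ) → ℝ)
    (hMono : MonoRep T X U φ φT)
    (x0 : Fin n → ℝ) (hx0 : x0 ∈ X 0)
    (u : ℕ → Fin m → ℝ) (x : ℕ → Fin n → ℝ)
    (hFeas : FeasFrom T f X U x0 0 u x)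
    (hOpt : ∀ u' x', FeasFrom T f X U x0 0 u' x' →
      nest φ φT u x 0 T ≤ nest φ φT u' x' 0 T)
    (hUniq : ∀ u' x', FeasFrom T f X U x0 0 u' x' →
      ((∀ t, t < T → u' t = u t) ∧ ∀ t, t ≤ T → x' t = x t) ∨
        nest φ φT u x 0 T < nest φ φT u' x' 0 T) :
    ∀ t, t < T →
      FeasFrom T f X U (x t) t u x ∧
        ∀ u' x', FeasFrom T f X U (x t) t u' x' →
          nest φ φT u x t (T - t) ≤ nest φ φT u' x' t (T - t) := by
  intro t ht
  obtain ⟨hx00, hxX, hdyn⟩ := hFeas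
  refine ⟨⟨rfl, fun i _ h2 => hxX i (by omega) h2,
      fun i _ h2 => hdyn i (by omega) h2⟩, ?_⟩
  intro u' x' hF'
  obtain ⟨hx't, hx'X, hdyn'⟩ := hF'
  by_contra hlt
  push_neg at hlt
  set v : ℕ → Fin m → ℝ := fun i => if i < t then u i else u' i with hv
  set y : ℕ → Fin n → ℝ := fun i => if i ≤ t then x i else x' i with hy
  have hy_eq : ∀ i, t ≤ i → y i = x' i := by
    intro i hi
    rcases eq_or_lt_of_le hi with rfl | hi'
    · simp [hy, hx't]
    · simp only [hy]
      rw [if_neg (by omega : ¬ i ≤ t)]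
  have hv_eq : ∀ i, t ≤ i → v i = u' i := by
    intro i hi
    simp only [hv]
    rw [if_neg (by omega : ¬ i < t)]
  have hFeas_vy : FeasFrom T f X U x0 0 v y := by
    refine ⟨?_, ?_, ?_⟩
    · rcases Nat.eq_zero_or_pos t with rfl | htp
      · rw [hy_eq 0 le_rfl, hx't, hx00]
      · simp only [hy, if_pos (by omega : (0:ℕ) ≤ t)]; exact hx00
    · intro i _ h2
      rcases le_or_gt i t with hi | hi
      · simpa [hy, hi] using hxX i (by omega) h2
      · rw [hy_eq i hi.le]; exact hx'X i (by omega) h2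
    · intro i _ h2
      rcases lt_or_ge i t with hi | hi
      · have hu := hdyn i (by omega) (by omega)
        refine ⟨by simpa [hv, hi] using hu.1, ?_⟩
        rcases eq_or_lt_of_le (Nat.succ_le_of_lt hi) with hit | hit
        · simp only [hy, if_pos hi.le, if_pos (le_of_eq hit), hv, if_pos hi]
          exact hu.2
        · simp only [hy, if_pos hi.le, if_pos (by omega : i + 1 ≤ t), hv, if_pos hi]
          exact hu.2
      · have hu := hdyn' i hi h2
        rw [hv_eq i hi, hy_eq i hi, hy_eq (i + 1) (by omega)]
        exact ⟨hu.1, hu.2⟩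
  have hcongr : nest φ φT v y t (T - t) = nest φ φT u' x' t (T - t) :=
    nest_congr' φ φT (T - t) t (fun i h1 _ => hv_eq i h1) (fun i h1 _ => hy_eq i h1)
  have h2 := hOpt v y hFeas_vy
  have h3 : nest φ φT v y t (T - t) ≤ nest φ φT u x t (T - t) := by
    rw [hcongr]; exact hlt.le
  have h4 := mono_chain' T X U φ φT hMono t (by omega)
    (fun i h => hFeas_vy.2.1 i (by omega) h)
    (fun i h => (hFeas_vy.2.2 i (by omega) h).1)
    (fun i h => hxX i (by omega) h)
    (fun i h => (hdyn i (by omega) h).1)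
    (fun i hi => by simp [hv, hi])
    (fun i hi => by simp [hy, hi])
    h3 t 0 (by omega)
  rw [Nat.sub_zero] at h4
  have h5 : nest φ φT v y 0 T = nest φ φT u x 0 T := le_antisymm h4 h2
  rcases hUniq v y hFeas_vy with ⟨hue, hxe⟩ | hstrict
  · have : nest φ φT v y t (T - t) = nest φ φT u x t (T - t) :=
      nest_congr' φ φT (T - t) t
        (fun i h1 h2 => hue i (by omega)) (fun i h1 h2 => hxe i (by omega))
    rw [hcongr] at this
    exact absurd this hlt.ne
  · exact absurd h5 (ne_of_gt hstrict)
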